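/- Let A ∈ ℝ^{n×n}, B ∈ ℝ^{n×m}, C ∈ ℝ^{p×n}, D ∈ ℝ^{p×m}, and let Q = Qᵀ ∈ ℝ^{p×p}, S ∈ ℝ^{p×m}, R = Rᵀ ∈ ℝ^{m×m}. Suppose there exists a symmetric positive definite matrix P ∈ ℝ^{n×n} such that the block matrix [[AᵀP + PA − CᵀQC, PB − CᵀS − CᵀQD], [(PB − CᵀS − CᵀQD)ᵀ, −DᵀQD − (DᵀS + SᵀD) − R]] is negative semidefinite. Then for every T ≥ 0, every continuous input u : [0,T] → ℝ^m, and every continuously differentiable x : [0,T] → ℝⁿ satisfying ẋ(t) = A x(t) + B u(t), with output y(t) = C x(t) + D u(t), the dissipation inequality ∫₀ᵀ (y(t)ᵀ Q y(t) + u(t)ᵀ R u(t) + 2 y(t)ᵀ S u(t)) dt ≥ x(T)ᵀ P x(T) − x(0)ᵀ P x(0) holds; that is, the linear system is QSR-dissipative with quadratic storage function V(x) = xᵀ P x. -/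

import Mathlib

open Matrix

private lemma mulVec_dot' {α β : Type*} [Fintype α] [Fintype β] (M : Matrix α β ℝ)
    (v : β → ℝ) (w : α → ℝ) : (M *ᵥ v) ⬝ᵥ w = v ⬝ᵥ (Mᵀ *ᵥ w) := by
  rw [dotProduct_comm, dotProduct_mulVec, ← mulVec_transpose, dotProduct_comm]

private lemma dot_swap' {α β : Type*} [Fintype α] [Fintype β] (M : Matrix α β ℝ)
    (v : α → ℝ) (w : β → ℝ) : v ⬝ᵥ (M *ᵥ w) = w ⬝ᵥ (Mᵀ *ᵥ v) := by
  rw [← mulVec_dot', dotProduct_comm]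

private lemma quad_deriv' {n : ℕ} (P : Matrix (Fin n) (Fin n) ℝ) {x : ℝ → Fin n → ℝ}
    {v : Fin n → ℝ} {s : Set ℝ} {t : ℝ} (hx : HasDerivWithinAt x v s t) :
    HasDerivWithinAt (fun τ => x τ ⬝ᵥ (P *ᵥ x τ))
      (v ⬝ᵥ (P *ᵥ x t) + x t ⬝ᵥ (P *ᵥ v)) s t := by
  have hxi : ∀ i, HasDerivWithinAt (fun τ => x τ i) (v i) s t :=
    fun i => hasDerivWithinAt_pi.mp hx i
  have key : ∀ i ∈ Finset.univ, HasDerivWithinAt (fun τ => x τ i * ∑ j, P i j * x τ j)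
      ((v i * ∑ j, P i j * x t j) + (x t i * ∑ j, P i j * v j)) s t := by
    intro i _
    exact (hxi i).mul (HasDerivWithinAt.fun_sum fun j _ => ((hxi j).const_mul (P i j)))
  have h := HasDerivWithinAt.fun_sum key
  have hfun : (fun τ => x τ ⬝ᵥ (P *ᵥ x τ))
      = fun τ => ∑ i, x τ i * ∑ j, P i j * x τ j := by
    funext τ; simp [dotProduct, mulVec]
  rw [hfun]
  refine h.congr_deriv ?_
  simp [dotProduct, mulVec, Finset.sum_add_distrib]

private lemma lmi_key {n m p : ℕ}
    (A : Matrix (Fin n) (Fin n) ℝ) (B : Matrix (Fin n) (Fin m) ℝ)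
    (C : Matrix (Fin p) (Fin n) ℝ) (D : Matrix (Fin p) (Fin m) ℝ)
    (Q : Matrix (Fin p) (Fin p) ℝ) (S : Matrix (Fin p) (Fin m) ℝ)
    (R : Matrix (Fin m) (Fin m) ℝ)
    (hQ : Qᵀ = Q) (P : Matrix (Fin n) (Fin n) ℝ) (hP : Pᵀ = P)
    (xv : Fin n → ℝ) (uv : Fin m → ℝ) :
    ((A *ᵥ xv + B *ᵥ uv) ⬝ᵥ (P *ᵥ xv) + xv ⬝ᵥ (P *ᵥ (A *ᵥ xv + B *ᵥ uv)))
      - ((C *ᵥ xv + D *ᵥ uv) ⬝ᵥ (Q *ᵥ (C *ᵥ xv + D *ᵥ uv))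
          + uv ⬝ᵥ (R *ᵥ uv)
          + 2 * ((C *ᵥ xv + D *ᵥ uv) ⬝ᵥ (S *ᵥ uv)))
    = Sum.elim xv uv ⬝ᵥ ((Matrix.fromBlocks
        (Aᵀ * P + P * A - Cᵀ * Q * C)
        (P * B - Cᵀ * S - Cᵀ * Q * D)
        (P * B - Cᵀ * S - Cᵀ * Q * D)ᵀ
        (-(Dᵀ * Q * D) - (Dᵀ * S + Sᵀ * D) - R)) *ᵥ Sum.elim xv uv) := by
  have e1 : uv ⬝ᵥ ((Sᵀ * C) *ᵥ xv) = xv ⬝ᵥ ((Cᵀ * S) *ᵥ uv) := by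
    rw [dot_swap']; simp [Matrix.transpose_mul]
  have e2 : uv ⬝ᵥ ((Sᵀ * D) *ᵥ uv) = uv ⬝ᵥ ((Dᵀ * S) *ᵥ uv) := by
    rw [dot_swap']; simp [Matrix.transpose_mul]
  have e3 : xv ⬝ᵥ ((P * B) *ᵥ uv) = uv ⬝ᵥ ((Bᵀ * P) *ᵥ xv) := by
    rw [dot_swap']; simp [Matrix.transpose_mul, hP]
  simp only [fromBlocks_mulVec, sumElim_dotProduct_sumElim, add_mulVec, sub_mulVec,
    neg_mulVec, mulVec_add, dotProduct_add, add_dotProduct, sub_dotProduct, dotProduct_sub,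
    dotProduct_neg, neg_dotProduct, mulVec_mulVec, mulVec_dot', transpose_mul,
    transpose_transpose, transpose_sub, transpose_add, transpose_neg, hQ, hP,
    Matrix.mul_assoc, Sum.elim_comp_inl, Sum.elim_comp_inr]
  rw [e1, e2, e3]
  ring

set_option maxHeartbeats 1000000 in
theorem lti_qsr_dissipative_of_lmi
    {n m p : ℕ}
    (A : Matrix (Fin n) (Fin n) ℝ) (B : Matrix (Fin n) (Fin m) ℝ)
    (C : Matrix (Fin p) (Fin n) ℝ) (D : Matrix (Fin p) (Fin m) ℝ)
    (Q : Matrix (Fin p) (Fin p) ℝ) (S : Matrix (Fin p) (Fin m) ℝ)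
    (R : Matrix (Fin m) (Fin m) ℝ)
    (hQ : Q.IsSymm) (hR : R.IsSymm)
    (P : Matrix (Fin n) (Fin n) ℝ) (hP : P.PosDef)
    (hLMI : (-(Matrix.fromBlocks
        (Aᵀ * P + P * A - Cᵀ * Q * C)
        (P * B - Cᵀ * S - Cᵀ * Q * D)
        (P * B - Cᵀ * S - Cᵀ * Q * D)ᵀ
        (-(Dᵀ * Q * D) - (Dᵀ * S + Sᵀ * D) - R))).PosSemidef)
    (T : ℝ) (hT : 0 ≤ T)
    (u : ℝ → Fin m → ℝ) (hu : ContinuousOn u (Set.Icc 0 T))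
    (x : ℝ → Fin n → ℝ)
    (hx : ∀ t ∈ Set.Icc (0 : ℝ) T,
      HasDerivWithinAt x (A *ᵥ x t + B *ᵥ u t) (Set.Icc (0 : ℝ) T) t) :
    x T ⬝ᵥ (P *ᵥ x T) - x 0 ⬝ᵥ (P *ᵥ x 0) ≤
      ∫ t in (0:ℝ)..T,
        ((C *ᵥ x t + D *ᵥ u t) ⬝ᵥ (Q *ᵥ (C *ᵥ x t + D *ᵥ u t))
          + u t ⬝ᵥ (R *ᵥ u t)
          + 2 * ((C *ᵥ x t + D *ᵥ u t) ⬝ᵥ (S *ᵥ u t))) := by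
  have hPs : Pᵀ = P := (by simpa using hP.isHermitian : P.IsSymm)
  have hQs : Qᵀ = Q := hQ
  -- the derivative of the storage function
  set g : ℝ → ℝ := fun t =>
    (A *ᵥ x t + B *ᵥ u t) ⬝ᵥ (P *ᵥ x t) + x t ⬝ᵥ (P *ᵥ (A *ᵥ x t + B *ᵥ u t)) with hg
  set f : ℝ → ℝ := fun t =>
    (C *ᵥ x t + D *ᵥ u t) ⬝ᵥ (Q *ᵥ (C *ᵥ x t + D *ᵥ u t))
      + u t ⬝ᵥ (R *ᵥ u t) + 2 * ((C *ᵥ x t + D *ᵥ u t) ⬝ᵥ (S *ᵥ u t)) with hf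
  have hxc : ContinuousOn x (Set.Icc 0 T) := fun t ht => (hx t ht).continuousWithinAt
  -- continuity of f and g
  have hFg : Continuous fun q : (Fin n → ℝ) × (Fin m → ℝ) =>
      (A *ᵥ q.1 + B *ᵥ q.2) ⬝ᵥ (P *ᵥ q.1) + q.1 ⬝ᵥ (P *ᵥ (A *ᵥ q.1 + B *ᵥ q.2)) := by
    have h1 : Continuous fun q : (Fin n → ℝ) × (Fin m → ℝ) => q.1 := continuous_fst
    have h2 : Continuous fun q : (Fin n → ℝ) × (Fin m → ℝ) => q.2 := continuous_snd
    exact (((continuous_const.matrix_mulVec h1).add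
        (continuous_const.matrix_mulVec h2)).dotProduct
        (continuous_const.matrix_mulVec h1)).add
      (h1.dotProduct (continuous_const.matrix_mulVec
        (((continuous_const.matrix_mulVec h1).add (continuous_const.matrix_mulVec h2)))))
  have hFf : Continuous fun q : (Fin n → ℝ) × (Fin m → ℝ) =>
      (C *ᵥ q.1 + D *ᵥ q.2) ⬝ᵥ (Q *ᵥ (C *ᵥ q.1 + D *ᵥ q.2))
        + q.2 ⬝ᵥ (R *ᵥ q.2) + 2 * ((C *ᵥ q.1 + D *ᵥ q.2) ⬝ᵥ (S *ᵥ q.2)) := by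
    have h1 : Continuous fun q : (Fin n → ℝ) × (Fin m → ℝ) => q.1 := continuous_fst
    have h2 : Continuous fun q : (Fin n → ℝ) × (Fin m → ℝ) => q.2 := continuous_snd
    have hy : Continuous fun q : (Fin n → ℝ) × (Fin m → ℝ) => C *ᵥ q.1 + D *ᵥ q.2 :=
      (continuous_const.matrix_mulVec h1).add (continuous_const.matrix_mulVec h2)
    exact ((hy.dotProduct (continuous_const.matrix_mulVec hy)).add
        (h2.dotProduct (continuous_const.matrix_mulVec h2))).add
      (continuous_const.mul (hy.dotProduct (continuous_const.matrix_mulVec h2)))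
  have hxu : ContinuousOn (fun t => (x t, u t)) (Set.Icc 0 T) := hxc.prodMk hu
  have hgc : ContinuousOn g (Set.Icc 0 T) := by
    rw [hg]
    have h := hFg.comp_continuousOn hxu
    simpa [Function.comp_def] using h
  have hfc : ContinuousOn f (Set.Icc 0 T) := by
    rw [hf]
    have h := hFf.comp_continuousOn hxu
    simpa [Function.comp_def] using h
  have hgi : IntervalIntegrable g MeasureTheory.volume 0 T :=
    hgc.intervalIntegrable_of_Icc hT
  have hfi : IntervalIntegrable f MeasureTheory.volume 0 T :=
    hfc.intervalIntegrable_of_Icc hT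
  -- FTC : ∫ g = V(T) - V(0)
  have hVc : ContinuousOn (fun t => x t ⬝ᵥ (P *ᵥ x t)) (Set.Icc 0 T) := by
    have : Continuous fun y : Fin n → ℝ => y ⬝ᵥ (P *ᵥ y) :=
      continuous_id.dotProduct (continuous_const.matrix_mulVec continuous_id)
    exact this.comp_continuousOn hxc
  have hftc : ∫ t in (0:ℝ)..T, g t = x T ⬝ᵥ (P *ᵥ x T) - x 0 ⬝ᵥ (P *ᵥ x 0) := by
    apply intervalIntegral.integral_eq_sub_of_hasDeriv_right_of_le hT hVc _ hgi
    intro t ht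
    rw [hg]
    have h1 : HasDerivWithinAt x (A *ᵥ x t + B *ᵥ u t) (Set.Icc (0:ℝ) T) t :=
      hx t (Set.Ioo_subset_Icc_self ht)
    have h2 : HasDerivAt x (A *ᵥ x t + B *ᵥ u t) t :=
      h1.hasDerivAt (Icc_mem_nhds ht.1 ht.2)
    exact (quad_deriv' P h2.hasDerivWithinAt)
  -- pointwise inequality g ≤ f on Icc
  have hle : ∀ t ∈ Set.Icc (0:ℝ) T, g t ≤ f t := by
    intro t _
    have h0 := hLMI.dotProduct_mulVec_nonneg (Sum.elim (x t) (u t))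
    rw [neg_mulVec, dotProduct_neg] at h0
    have h0' : Sum.elim (x t) (u t) ⬝ᵥ ((Matrix.fromBlocks
        (Aᵀ * P + P * A - Cᵀ * Q * C)
        (P * B - Cᵀ * S - Cᵀ * Q * D)
        (P * B - Cᵀ * S - Cᵀ * Q * D)ᵀ
        (-(Dᵀ * Q * D) - (Dᵀ * S + Sᵀ * D) - R)) *ᵥ Sum.elim (x t) (u t)) ≤ 0 := by
      simpa using h0
    have hkey := lmi_key A B C D Q S R hQs P hPs (x t) (u t)
    have : g t - f t ≤ 0 := by rw [hg, hf]; dsimp only; rw [hkey]; exact h0'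
    linarith
  calc x T ⬝ᵥ (P *ᵥ x T) - x 0 ⬝ᵥ (P *ᵥ x 0) = ∫ t in (0:ℝ)..T, g t := hftc.symm
    _ ≤ ∫ t in (0:ℝ)..T, f t := intervalIntegral.integral_mono_on hT hgi hfi hle
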